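/- Let K ⊂ ℂ^n be compact, let ν be a finite Borel measure on K, and let Q : K → ℝ be continuous (write w = e^{-Q}). Suppose for each k ≥ 1 there are polynomials q_1^{(k)},…,q_{N_k}^{(k)} of degree at most k (N_k = C(n+k,k)) which are orthonormal with respect to the inner product ⟨p, q⟩ := ∫_K p q̄ w^{2k} dν and whose ℂ-linear span contains every polynomial of degree at most k. Define the k-th Bergman function B_k^{ν,w}(z) := ∑_{j=1}^{N_k} |q_j^{(k)}(z)|² w(z)^{2k} for z ∈ K. If (sup_{z ∈ K} B_k^{ν,w}(z))^{1/(2k)} → 1 as k → ∞, then (K, ν, Q) satisfies the weighted Bernstein–Markov property. -/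

import Mathlib

open MeasureTheory Filter

variable {n : ℕ}

/-- `(K, ν, Q)` satisfies the weighted Bernstein–Markov property in `ℂ^n`
(with `w = e^{-Q}`). -/
def WeightedBernsteinMarkov (K : Set (Fin n → ℂ)) (ν : Measure (Fin n → ℂ))
    (Q : (Fin n → ℂ) → ℝ) : Prop :=
  ∀ ε : ℝ, 0 < ε → ∃ C : ℝ, 0 < C ∧ ∀ k : ℕ, 1 ≤ k → ∀ p : MvPolynomial (Fin n) ℂ,
    p.totalDegree ≤ k → ∀ z ∈ K,
      ‖MvPolynomial.eval z p‖ * Real.exp (-Q z) ^ k ≤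
        C * (1 + ε) ^ k *
          Real.sqrt (∫ w in K, ‖MvPolynomial.eval w p‖ ^ 2 *
            Real.exp (-Q w) ^ (2 * k) ∂ν)

-- Auxiliary key lemma
lemma bm_key {m : ℕ} (K : Set (Fin n → ℂ)) (hK : IsCompact K)
    (ν : Measure (Fin n → ℂ)) [IsFiniteMeasure ν]
    (Q : (Fin n → ℂ) → ℝ) (hQ : ContinuousOn Q K) (k : ℕ)
    (q : Fin m → MvPolynomial (Fin n) ℂ)
    (hortho : ∀ i j : Fin m,
      (∫ z in K, MvPolynomial.eval z (q i) *
        (starRingEnd ℂ) (MvPolynomial.eval z (q j)) *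
        ((Real.exp (-Q z) ^ (2 * k) : ℝ) : ℂ) ∂ν) = if i = j then 1 else 0)
    (p : MvPolynomial (Fin n) ℂ) (hp : p ∈ Submodule.span ℂ (Set.range q))
    (z : Fin n → ℂ) (hz : z ∈ K) :
    (‖MvPolynomial.eval z p‖ * Real.exp (-Q z) ^ k) ^ 2 ≤
      (∑ j, ‖MvPolynomial.eval z (q j)‖ ^ 2 * Real.exp (-Q z) ^ (2 * k)) *
        (∫ w in K, ‖MvPolynomial.eval w p‖ ^ 2 * Real.exp (-Q w) ^ (2 * k) ∂ν) := by
  classical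
  obtain ⟨c, hc⟩ := (Submodule.mem_span_range_iff_exists_fun ℂ).mp hp
  set e : Fin m → (Fin n → ℂ) → ℂ := fun j w => MvPolynomial.eval w (q j) with he
  set w2 : (Fin n → ℂ) → ℂ := fun w => ((Real.exp (-Q w) ^ (2 * k) : ℝ) : ℂ) with hw2
  have h_eval : ∀ w : Fin n → ℂ, MvPolynomial.eval w p = ∑ j, c j * e j w := by
    intro w
    rw [← hc, map_sum]
    simp [he, MvPolynomial.smul_eq_C_mul]
  -- continuity facts
  have hw2c : ContinuousOn w2 K :=
    Complex.continuous_ofReal.comp_continuousOn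
      (((Real.continuous_exp.comp_continuousOn hQ.neg).pow _))
  have hec : ∀ j, Continuous (e j) := fun j => MvPolynomial.continuous_eval _
  have hint_e : ∀ i j, IntegrableOn
      (fun w => e i w * (starRingEnd ℂ) (e j w) * w2 w) K ν := by
    intro i j
    exact (((hec i).continuousOn.mul
      ((continuous_star.comp (hec j)).continuousOn)).mul hw2c).integrableOn_compact hK
  -- the complex integral
  set I : ℂ := ∫ w in K,
      MvPolynomial.eval w p * (starRingEnd ℂ) (MvPolynomial.eval w p) * w2 w ∂ν with hI
  have hI1 : I = ((∫ w in K,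
      ‖MvPolynomial.eval w p‖ ^ 2 * Real.exp (-Q w) ^ (2 * k) ∂ν : ℝ) : ℂ) := by
    have heq : ∀ w : Fin n → ℂ,
        MvPolynomial.eval w p * (starRingEnd ℂ) (MvPolynomial.eval w p) * w2 w =
          ((‖MvPolynomial.eval w p‖ ^ 2 * Real.exp (-Q w) ^ (2 * k) : ℝ) : ℂ) := by
      intro w
      simp only [hw2]
      rw [Complex.mul_conj]
      push_cast
      rw [Complex.normSq_eq_norm_sq]
      push_cast
      ring
    rw [hI, integral_congr_ae (Filter.Eventually.of_forall heq)]
    exact integral_ofReal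
  have hI2 : I = ((∑ j, ‖c j‖ ^ 2 : ℝ) : ℂ) := by
    have hexp : ∀ w : Fin n → ℂ,
        MvPolynomial.eval w p * (starRingEnd ℂ) (MvPolynomial.eval w p) * w2 w =
          ∑ i, ∑ j, (c i * (starRingEnd ℂ) (c j)) *
            (e i w * (starRingEnd ℂ) (e j w) * w2 w) := by
      intro w
      rw [h_eval w, map_sum, Finset.sum_mul_sum, Finset.sum_mul]
      refine Finset.sum_congr rfl fun i _ => ?_
      rw [Finset.sum_mul]
      refine Finset.sum_congr rfl fun j _ => ?_
      rw [map_mul]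
      ring
    have : I = ∑ i, ∑ j, (c i * (starRingEnd ℂ) (c j)) *
        ∫ w in K, e i w * (starRingEnd ℂ) (e j w) * w2 w ∂ν := by
      rw [hI]
      rw [integral_congr_ae (Filter.Eventually.of_forall hexp)]
      rw [integral_finset_sum _ (fun i _ => integrable_finset_sum _
        (fun j _ => (hint_e i j).const_mul _))]
      refine Finset.sum_congr rfl fun i _ => ?_
      rw [integral_finset_sum _ (fun j _ => (hint_e i j).const_mul _)]
      exact Finset.sum_congr rfl fun j _ => integral_const_mul _ _
    rw [this]
    have : ∀ i : Fin m, ∑ j, (c i * (starRingEnd ℂ) (c j)) *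
        ∫ w in K, e i w * (starRingEnd ℂ) (e j w) * w2 w ∂ν
        = ((‖c i‖ ^ 2 : ℝ) : ℂ) := by
      intro i
      have : ∀ j : Fin m, (∫ w in K, e i w * (starRingEnd ℂ) (e j w) * w2 w ∂ν)
          = if i = j then 1 else 0 := fun j => hortho i j
      simp only [this, mul_ite, mul_one, mul_zero, Finset.sum_ite_eq, Finset.mem_univ, if_true]
      rw [Complex.mul_conj, Complex.normSq_eq_norm_sq]
    rw [Finset.sum_congr rfl fun i _ => this i]
    push_cast
    ring
  have hint : (∫ w in K, ‖MvPolynomial.eval w p‖ ^ 2 * Real.exp (-Q w) ^ (2 * k) ∂ν)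
      = ∑ j, ‖c j‖ ^ 2 := by
    have := hI1.symm.trans hI2
    exact_mod_cast this
  -- Cauchy-Schwarz pointwise
  have hCS : ‖MvPolynomial.eval z p‖ ^ 2 ≤ (∑ j, ‖c j‖ ^ 2) * (∑ j, ‖e j z‖ ^ 2) := by
    calc ‖MvPolynomial.eval z p‖ ^ 2 ≤ (∑ j, ‖c j‖ * ‖e j z‖) ^ 2 := by
          apply pow_le_pow_left₀ (norm_nonneg _)
          rw [h_eval z]
          refine (norm_sum_le _ _).trans ?_
          simp [norm_mul]
      _ ≤ _ := Finset.sum_mul_sq_le_sq_mul_sq _ _ _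
  have hwpos : (0:ℝ) < Real.exp (-Q z) := Real.exp_pos _
  have hBz : (∑ j, ‖e j z‖ ^ 2) * Real.exp (-Q z) ^ (2 * k)
      = ∑ j, ‖MvPolynomial.eval z (q j)‖ ^ 2 * Real.exp (-Q z) ^ (2 * k) := by
    rw [Finset.sum_mul]
  calc (‖MvPolynomial.eval z p‖ * Real.exp (-Q z) ^ k) ^ 2
      = ‖MvPolynomial.eval z p‖ ^ 2 * Real.exp (-Q z) ^ (2 * k) := by
        rw [mul_pow, ← pow_mul, mul_comm k 2]
    _ ≤ ((∑ j, ‖c j‖ ^ 2) * (∑ j, ‖e j z‖ ^ 2)) * Real.exp (-Q z) ^ (2 * k) := by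
        apply mul_le_mul_of_nonneg_right hCS (by positivity)
    _ = (∑ j, ‖MvPolynomial.eval z (q j)‖ ^ 2 * Real.exp (-Q z) ^ (2 * k)) *
          (∑ j, ‖c j‖ ^ 2) := by rw [mul_assoc, hBz]; ring
    _ = _ := by rw [hint]

/-- If the `k`-th Bergman functions `B_k^{ν,w}(z) = ∑_j |q_j^{(k)}(z)|² w(z)^{2k}`
(built from orthonormal bases `q_1^{(k)},…,q_{N_k}^{(k)}` of the polynomials of degree at
most `k` for the weighted `L²(ν)` inner product) satisfy
`(sup_K B_k^{ν,w})^{1/(2k)} → 1`, then `(K, ν, Q)` satisfies the weighted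
Bernstein–Markov property. -/
theorem bergman_growth_implies_weighted_bernstein_markov
    (K : Set (Fin n → ℂ)) (hK : IsCompact K)
    (ν : Measure (Fin n → ℂ)) [IsFiniteMeasure ν] (hν : ν Kᶜ = 0)
    (Q : (Fin n → ℂ) → ℝ) (hQ : ContinuousOn Q K)
    (q : ∀ k : ℕ, Fin ((n + k).choose k) → MvPolynomial (Fin n) ℂ)
    (hqdeg : ∀ k : ℕ, 1 ≤ k → ∀ j, (q k j).totalDegree ≤ k)
    (hortho : ∀ k : ℕ, 1 ≤ k → ∀ i j : Fin ((n + k).choose k),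
      (∫ z in K, MvPolynomial.eval z (q k i) *
        (starRingEnd ℂ) (MvPolynomial.eval z (q k j)) *
        ((Real.exp (-Q z) ^ (2 * k) : ℝ) : ℂ) ∂ν) = if i = j then 1 else 0)
    (hspan : ∀ k : ℕ, 1 ≤ k → ∀ p : MvPolynomial (Fin n) ℂ, p.totalDegree ≤ k →
      p ∈ Submodule.span ℂ (Set.range (q k)))
    (hB : Tendsto (fun k : ℕ =>
        (sSup ((fun z : Fin n → ℂ =>
          ∑ j, ‖MvPolynomial.eval z (q k j)‖ ^ 2 * Real.exp (-Q z) ^ (2 * k)) '' K)) ^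
            ((1 : ℝ) / (2 * (k : ℝ)))) atTop (nhds 1)) :
    WeightedBernsteinMarkov K ν Q := by
  intro ε hε
  rcases Set.eq_empty_or_nonempty K with hKe | hKne
  · exact ⟨1, one_pos, fun k hk p hp z hz => absurd hz (by simp [hKe])⟩
  set S : ℕ → ℝ := fun k => sSup ((fun z : Fin n → ℂ =>
    ∑ j, ‖MvPolynomial.eval z (q k j)‖ ^ 2 * Real.exp (-Q z) ^ (2 * k)) '' K) with hSdef
  have hBcont : ∀ k : ℕ, ContinuousOn (fun z : Fin n → ℂ =>
      ∑ j, ‖MvPolynomial.eval z (q k j)‖ ^ 2 * Real.exp (-Q z) ^ (2 * k)) K := by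
    intro k
    apply continuousOn_finset_sum
    intro j _
    exact (((MvPolynomial.continuous_eval _).norm.pow 2).continuousOn).mul
      ((Real.continuous_exp.comp_continuousOn hQ.neg).pow _)
  have hBleS : ∀ k : ℕ, ∀ z ∈ K,
      (∑ j, ‖MvPolynomial.eval z (q k j)‖ ^ 2 * Real.exp (-Q z) ^ (2 * k)) ≤ S k :=
    fun k z hz => le_csSup (hK.image_of_continuousOn (hBcont k)).bddAbove ⟨z, hz, rfl⟩
  have hS0 : ∀ k : ℕ, 0 ≤ S k := by
    intro k
    obtain ⟨z, hz⟩ := hKne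
    refine le_trans ?_ (hBleS k z hz)
    exact Finset.sum_nonneg fun j _ => by positivity
  have hIk : ∀ (k : ℕ) (p : MvPolynomial (Fin n) ℂ),
      0 ≤ ∫ w in K, ‖MvPolynomial.eval w p‖ ^ 2 * Real.exp (-Q w) ^ (2 * k) ∂ν :=
    fun k p => integral_nonneg fun w => by positivity
  have key : ∀ k : ℕ, 1 ≤ k → ∀ p : MvPolynomial (Fin n) ℂ, p.totalDegree ≤ k →
      ∀ z ∈ K, ‖MvPolynomial.eval z p‖ * Real.exp (-Q z) ^ k ≤
        Real.sqrt (S k) * Real.sqrt (∫ w in K, ‖MvPolynomial.eval w p‖ ^ 2 *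
          Real.exp (-Q w) ^ (2 * k) ∂ν) := by
    intro k hk p hp z hz
    have h1 := bm_key K hK ν Q hQ k (q k) (hortho k hk) p (hspan k hk p hp) z hz
    have h2 : (‖MvPolynomial.eval z p‖ * Real.exp (-Q z) ^ k) ^ 2 ≤
        S k * (∫ w in K, ‖MvPolynomial.eval w p‖ ^ 2 * Real.exp (-Q w) ^ (2 * k) ∂ν) :=
      h1.trans (mul_le_mul_of_nonneg_right (hBleS k z hz) (hIk k p))
    have h3 : ‖MvPolynomial.eval z p‖ * Real.exp (-Q z) ^ k =
        Real.sqrt ((‖MvPolynomial.eval z p‖ * Real.exp (-Q z) ^ k) ^ 2) :=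
      (Real.sqrt_sq (by positivity)).symm
    rw [h3, ← Real.sqrt_mul (hS0 k)]
    exact Real.sqrt_le_sqrt h2
  have hev : ∀ᶠ k : ℕ in atTop, (S k) ^ ((1:ℝ)/(2*(k:ℝ))) ≤ 1 + ε :=
    hB.eventually_le_const (by linarith)
  obtain ⟨k₀, hk₀⟩ := eventually_atTop.mp hev
  refine ⟨1 + ∑ i ∈ Finset.range k₀, Real.sqrt (S i), by positivity, ?_⟩
  intro k hk p hp z hz
  have hC1 : (1:ℝ) ≤ 1 + ∑ i ∈ Finset.range k₀, Real.sqrt (S i) :=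
    le_add_of_nonneg_right (Finset.sum_nonneg fun i _ => Real.sqrt_nonneg _)
  have hCpos : (0:ℝ) < 1 + ∑ i ∈ Finset.range k₀, Real.sqrt (S i) :=
    lt_of_lt_of_le one_pos hC1
  have hsq : Real.sqrt (S k) ≤
      (1 + ∑ i ∈ Finset.range k₀, Real.sqrt (S i)) * (1 + ε) ^ k := by
    by_cases hkk : k₀ ≤ k
    · have hkpos : (0:ℝ) < (k:ℝ) := by exact_mod_cast hk
      have h1 : S k ≤ (1 + ε) ^ (2 * k) := by
        have heq : S k = ((S k) ^ ((1:ℝ)/(2*(k:ℝ)))) ^ (2*k) := by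
          rw [← Real.rpow_natCast ((S k) ^ ((1:ℝ)/(2*(k:ℝ)))) (2*k),
            ← Real.rpow_mul (hS0 k)]
          push_cast
          rw [one_div, inv_mul_cancel₀ (by positivity), Real.rpow_one]
        rw [heq]
        exact pow_le_pow_left₀ (Real.rpow_nonneg (hS0 k) _) (hk₀ k hkk) _
      have h3 : Real.sqrt (S k) ≤ (1 + ε) ^ k := by
        refine (Real.sqrt_le_sqrt h1).trans ?_
        rw [mul_comm 2 k, pow_mul, Real.sqrt_sq (by positivity)]
      calc Real.sqrt (S k) ≤ (1+ε)^k := h3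
        _ = 1 * (1+ε)^k := (one_mul _).symm
        _ ≤ _ := mul_le_mul_of_nonneg_right hC1 (by positivity)
    · push_neg at hkk
      have h1 : Real.sqrt (S k) ≤ 1 + ∑ i ∈ Finset.range k₀, Real.sqrt (S i) := by
        refine le_trans ?_ (le_add_of_nonneg_left zero_le_one)
        exact Finset.single_le_sum (f := fun i => Real.sqrt (S i))
          (fun i _ => Real.sqrt_nonneg _) (Finset.mem_range.mpr hkk)
      exact h1.trans (le_mul_of_one_le_right hCpos.le
        (one_le_pow₀ (by linarith)))
  exact (key k hk p hp z hz).trans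
    (mul_le_mul_of_nonneg_right hsq (Real.sqrt_nonneg _))
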